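/- Let T be a real random variable with E[T^2] finite and let R = T^2/(1 + (T^2 - 1)/k) for an integer k ≥ 2. If T has a t-distribution with k-1 degrees of freedom and k > 9 (so that T has finite eighth moment), then |E[(R - 1)^2] - 2| ≤ K/k for a constant K independent of k. -/

import Mathlib

open MeasureTheory ProbabilityTheory Real Filter Set Topology

/-- Density of the Student t-distribution with `ν` degrees of freedom. -/
noncomputable def studentPdf (ν : ℝ) (t : ℝ) : ℝ :=
  Gamma ((ν + 1) / 2) / (Real.sqrt (ν * π) * Gamma (ν / 2)) *
    (1 + t ^ 2 / ν) ^ (-(ν + 1) / 2)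

/-- A real random variable has the t-distribution with `ν` degrees of freedom. -/
def HasStudentTDist {Ω : Type*} [MeasureSpace Ω] (T : Ω → ℝ) (ν : ℝ) : Prop :=
  Measure.map T (ℙ : Measure Ω) =
    volume.withDensity (fun t => ENNReal.ofReal (studentPdf ν t))

section helpers

variable {ν : ℝ}

lemma base_pos (hν0 : 0 < ν) (t : ℝ) : (0:ℝ) < 1 + t ^ 2 / ν := by positivity

lemma contG (hν0 : 0 < ν) (n : ℕ) (r : ℝ) :
    Continuous (fun t : ℝ => t ^ n * (1 + t ^ 2 / ν) ^ (-r)) := by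
  refine (continuous_pow n).mul (Continuous.rpow_const (by continuity) fun t => ?_)
  exact Or.inl (base_pos hν0 t).ne'

lemma pwG (hν1 : 1 ≤ ν) (n : ℕ) {r : ℝ} (hr : 0 ≤ r) (t : ℝ) :
    |t ^ n * (1 + t ^ 2 / ν) ^ (-r)| ≤ (2*ν) ^ r * (1 + |t|) ^ ((n:ℝ) - 2*r) := by
  have hb := base_pos (show (0:ℝ) < ν by linarith) t
  have h1t : (0:ℝ) < 1 + |t| := by positivity
  have habs : |t ^ n * (1 + t ^ 2 / ν) ^ (-r)| = |t| ^ n * (1 + t ^ 2 / ν) ^ (-r) := by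
    rw [abs_mul, abs_pow, abs_of_nonneg (rpow_nonneg hb.le _)]
  rw [habs]
  have key : (1 + |t|) ^ (2:ℕ) / (2*ν) ≤ 1 + t ^ 2 / ν := by
    rw [div_le_iff₀ (by linarith)]
    have := abs_nonneg t
    have h2 : |t|^2 = t^2 := sq_abs t
    have h3 : t^2/ν*ν = t^2 := div_mul_cancel₀ _ (by linarith)
    nlinarith [sq_nonneg (|t| - 1)]
  have step1 : (1 + t ^ 2 / ν) ^ (-r) ≤ ((1 + |t|) ^ (2:ℕ) / (2*ν)) ^ (-r) :=
    rpow_le_rpow_of_nonpos (by positivity) key (neg_nonpos.mpr hr)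
  have step2 : ((1 + |t|) ^ (2:ℕ) / (2*ν)) ^ (-r) = (2*ν) ^ r * (1 + |t|) ^ ((-2:ℝ)*r) := by
    rw [div_rpow (by positivity) (by linarith), ← rpow_natCast (1 + |t|) 2,
      ← rpow_mul h1t.le, rpow_neg (by linarith)]
    push_cast
    rw [div_eq_mul_inv, inv_inv, mul_comm]
    congr 1
    ring
  calc |t| ^ n * (1 + t ^ 2 / ν) ^ (-r)
      ≤ (1 + |t|) ^ n * ((2*ν) ^ r * (1 + |t|) ^ ((-2:ℝ)*r)) := by
        rw [← step2]
        exact mul_le_mul (pow_le_pow_left₀ (abs_nonneg t) (by linarith) n) step1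
          (rpow_nonneg hb.le _) (by positivity)
    _ = (2*ν) ^ r * (1 + |t|) ^ ((n:ℝ) - 2*r) := by
        rw [← rpow_natCast (1 + |t|) n, mul_left_comm, ← rpow_add h1t]
        congr 2
        ring

lemma intG (hν1 : 1 ≤ ν) {n : ℕ} {r : ℝ} (h : (n : ℝ) + 1 < 2 * r) :
    Integrable (fun t : ℝ => t ^ n * (1 + t ^ 2 / ν) ^ (-r)) := by
  have hr : 0 ≤ r := by nlinarith [Nat.cast_nonneg (α := ℝ) n]
  have hmaj : Integrable (fun t : ℝ => (2*ν) ^ r * (1 + ‖t‖) ^ (-(2*r - (n:ℝ)))) :=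
    (integrable_one_add_norm (by simpa using by linarith : (Module.finrank ℝ ℝ : ℝ) < 2*r - n)).const_mul _
  refine hmaj.mono' ((contG (by linarith) n r).aestronglyMeasurable) (ae_of_all _ fun t => ?_)
  have := pwG hν1 n hr t
  rw [abs_mul, abs_pow] at this
  simpa [Real.norm_eq_abs, neg_sub] using this

end helpers

section helpers2
variable {ν : ℝ}

lemma tendsto_G (hν1 : 1 ≤ ν) {n : ℕ} {r : ℝ} (h : (n:ℝ) < 2*r) :
    Tendsto (fun t : ℝ => t ^ n * (1 + t ^ 2 / ν) ^ (-r)) (Filter.cocompact ℝ) (𝓝 0) := by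
  have hr : 0 ≤ r := by nlinarith [Nat.cast_nonneg (α := ℝ) n]
  have h1 : Tendsto (fun t : ℝ => 1 + |t|) (Filter.cocompact ℝ) atTop := by
    have := tendsto_norm_cocompact_atTop (E := ℝ)
    change Tendsto (fun t : ℝ => |t|) _ _ at this
    exact tendsto_atTop_add_const_left _ 1 this
  have h2 : Tendsto (fun t : ℝ => (2*ν) ^ r * (1 + |t|) ^ (-(2*r - (n:ℝ))))
      (Filter.cocompact ℝ) (𝓝 ((2*ν)^r * 0)) :=
    ((tendsto_rpow_neg_atTop (by linarith)).comp h1).const_mul _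
  rw [mul_zero] at h2
  refine squeeze_zero_norm (fun t => ?_) h2
  rw [Real.norm_eq_abs, neg_sub]
  exact pwG hν1 n hr t

lemma derivG (hν0 : 0 < ν) (n : ℕ) (r : ℝ) (t : ℝ) :
    HasDerivAt (fun t : ℝ => t ^ n * (1 + t ^ 2 / ν) ^ (-r))
      ((n:ℝ) * (t ^ (n-1) * (1 + t ^ 2 / ν) ^ (-r))
        - (2*r/ν) * (t ^ (n+1) * (1 + t ^ 2 / ν) ^ (-(r+1)))) t := by
  have hb : (1 + t ^ 2 / ν) ≠ 0 := (base_pos hν0 t).ne'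
  have hinner : HasDerivAt (fun t : ℝ => 1 + t ^ 2 / ν) (2 * t / ν) t := by
    have := ((hasDerivAt_pow 2 t).div_const ν).const_add 1
    simpa using this
  have houter := hinner.rpow_const (p := -r) (Or.inl hb)
  have hmul := (hasDerivAt_pow n t).mul houter
  refine HasDerivAt.congr_deriv hmul ?_
  rw [show -(r+1) = -r - 1 by ring]
  ring

lemma integral_deriv_eq_zero' {f f' : ℝ → ℝ} (hd : ∀ t, HasDerivAt f (f' t) t)
    (hi : Integrable f') (htop : Tendsto f atTop (𝓝 0)) (hbot : Tendsto f atBot (𝓝 0)) :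
    ∫ t, f' t = 0 := by
  have h1 : ∫ t in Iic (0:ℝ), f' t = f 0 - 0 :=
    integral_Iic_of_hasDerivAt_of_tendsto' (fun x _ => hd x) hi.integrableOn hbot
  have h2 : ∫ t in Ioi (0:ℝ), f' t = 0 - f 0 :=
    integral_Ioi_of_hasDerivAt_of_tendsto' (fun x _ => hd x) hi.integrableOn htop
  rw [← intervalIntegral.integral_Iic_add_Ioi (b := (0:ℝ)) hi.integrableOn hi.integrableOn, h1, h2]; ring

lemma moment_rec (hν : 9 ≤ ν) {j : ℕ} (hj : j ≤ 3) :
    (ν - (2*j+2)) * ∫ t : ℝ, t ^ (2*j+2) * (1 + t ^ 2 / ν) ^ (-((ν+1)/2))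
      = (2*j+1) * ν * ∫ t : ℝ, t ^ (2*j) * (1 + t ^ 2 / ν) ^ (-((ν+1)/2)) := by
  have hν0 : (0:ℝ) < ν := by linarith
  have hν1 : (1:ℝ) ≤ ν := by linarith
  have hj' : (j:ℝ) ≤ 3 := by exact_mod_cast hj
  set r : ℝ := (ν-1)/2 with hr
  have hr1 : r + 1 = (ν+1)/2 := by rw [hr]; ring
  have hd : ∀ t, HasDerivAt (fun t : ℝ => t ^ (2*j+1) * (1 + t ^ 2 / ν) ^ (-r))
      (((2*j+1 : ℕ):ℝ) * (t ^ (2*j) * (1 + t ^ 2 / ν) ^ (-r))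
        - (2*r/ν) * (t ^ (2*j+2) * (1 + t ^ 2 / ν) ^ (-((ν+1)/2)))) t := by
    intro t
    have := derivG hν0 (2*j+1) r t
    rw [hr1] at this
    simpa using this
  have hI1 : Integrable (fun t : ℝ => t ^ (2*j) * (1 + t ^ 2 / ν) ^ (-r)) :=
    intG hν1 (by push_cast; rw [hr]; nlinarith)
  have hI2 : Integrable (fun t : ℝ => t ^ (2*j+2) * (1 + t ^ 2 / ν) ^ (-((ν+1)/2))) :=
    intG hν1 (by push_cast; nlinarith)
  have hI0 : Integrable (fun t : ℝ => t ^ (2*j) * (1 + t ^ 2 / ν) ^ (-((ν+1)/2))) :=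
    intG hν1 (by push_cast; nlinarith)
  have hf'int : Integrable (fun t : ℝ =>
      ((2*j+1 : ℕ):ℝ) * (t ^ (2*j) * (1 + t ^ 2 / ν) ^ (-r))
        - (2*r/ν) * (t ^ (2*j+2) * (1 + t ^ 2 / ν) ^ (-((ν+1)/2)))) :=
    (hI1.const_mul _).sub (hI2.const_mul _)
  have hcc := tendsto_G (n := 2*j+1) (r := r) hν1 (by push_cast; rw [hr]; nlinarith)
  rw [cocompact_eq_atBot_atTop] at hcc
  have hzero : (0:ℝ) =
      ((2*j+1 : ℕ):ℝ) * (∫ t : ℝ, t ^ (2*j) * (1 + t ^ 2 / ν) ^ (-r))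
        - (2*r/ν) * ∫ t : ℝ, t ^ (2*j+2) * (1 + t ^ 2 / ν) ^ (-((ν+1)/2)) := by
    rw [← integral_const_mul, ← integral_const_mul, ← integral_sub (hI1.const_mul _) (hI2.const_mul _)]
    exact (integral_deriv_eq_zero' hd hf'int (hcc.mono_left le_sup_right)
      (hcc.mono_left le_sup_left)).symm
  have hsplit : (∫ t : ℝ, t ^ (2*j) * (1 + t ^ 2 / ν) ^ (-r))
      = (∫ t : ℝ, t ^ (2*j) * (1 + t ^ 2 / ν) ^ (-((ν+1)/2)))
        + (1/ν) * ∫ t : ℝ, t ^ (2*j+2) * (1 + t ^ 2 / ν) ^ (-((ν+1)/2)) := by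
    rw [← integral_const_mul, ← integral_add hI0 (hI2.const_mul _)]
    congr 1; funext t
    have hb := base_pos hν0 t
    have : (1 + t ^ 2 / ν) ^ (-r) = (1 + t ^ 2 / ν) * (1 + t ^ 2 / ν) ^ (-((ν+1)/2)) := by
      rw [show -r = 1 + (-((ν+1)/2)) by rw [hr]; ring, rpow_add hb, rpow_one]
    rw [this, pow_add]
    field_simp
  rw [hsplit] at hzero
  have hνne : ν ≠ 0 := by linarith
  rw [hr] at hzero
  set B0 := ∫ (t : ℝ), t ^ (2 * j) * (1 + t ^ 2 / ν) ^ (-((ν + 1) / 2)) with hB0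
  set B2 := ∫ (t : ℝ), t ^ (2 * j + 2) * (1 + t ^ 2 / ν) ^ (-((ν + 1) / 2)) with hB2
  field_simp at hzero
  push_cast at hzero ⊢
  first
  | linear_combination hzero
  | linear_combination -hzero
  | linarith

end helpers2

set_option maxHeartbeats 1000000 in
lemma key_alg {r x : ℝ} (hr : 10 ≤ r) (hx : 0 ≤ x) :
    |(x/(1+(x-1)/r) - 1)^2 - (x-1)^2| ≤ 4/r * (x^2+1)^2 := by
  have hr0 : (0:ℝ) < r := by linarith
  have hrne : r ≠ 0 := hr0.ne'
  have hD9 : (9:ℝ)/10 ≤ 1 + (x-1)/r := by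
    have h1 : -(1:ℝ)/10 ≤ (x-1)/r := by
      rw [div_le_div_iff₀ (by norm_num) hr0]
      nlinarith
    linarith
  have hD : (0:ℝ) < 1 + (x-1)/r := by linarith
  have hDne : (1 + (x-1)/r) ≠ 0 := hD.ne'
  have hB : r - 1 + x ≠ 0 := ne_of_gt (by linarith)
  have hA : 1 + (x-1)/r = (r-1+x)/r := by field_simp; ring
  have e : (x/(1+(x-1)/r) - 1)^2 - (x-1)^2
      = (x-1)^2 * ((1-1/r)^2 - (1+(x-1)/r)^2) / (1+(x-1)/r)^2 := by
    rw [hA]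
    field_simp
    ring
  have eY : (1-1/r)^2 - (1+(x-1)/r)^2 = -(2*x)/r + (1-(x-1)^2)/r^2 := by
    rw [hA]
    field_simp
    ring
  have hYbound : |(1-1/r)^2 - (1+(x-1)/r)^2| ≤ 2*x/r + (1+(x-1)^2)/r^2 := by
    rw [eY]
    refine (abs_add_le _ _).trans ?_
    have h1 : |-(2*x)/r| = 2*x/r := by
      rw [abs_div, abs_of_pos hr0, abs_neg, abs_of_nonneg (by linarith : (0:ℝ) ≤ 2*x)]
    have h2 : |(1-(x-1)^2)/r^2| ≤ (1+(x-1)^2)/r^2 := by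
      rw [abs_div, abs_of_pos (by positivity : (0:ℝ) < r^2)]
      have h4 : |1-(x-1)^2| ≤ 1+(x-1)^2 := by
        rw [abs_le]; constructor <;> nlinarith [sq_nonneg (x-1)]
      exact div_le_div₀ (by positivity) h4 (by positivity) le_rfl
    linarith
  have hD2 : (81:ℝ)/100 ≤ (1 + (x-1)/r)^2 := by nlinarith
  have habs : |(x/(1+(x-1)/r) - 1)^2 - (x-1)^2|
      = (x-1)^2 * |(1-1/r)^2 - (1+(x-1)/r)^2| / (1+(x-1)/r)^2 := by
    rw [e, abs_div, abs_mul, abs_of_nonneg (sq_nonneg (x-1)), abs_of_nonneg (sq_nonneg (1 + (x-1)/r))]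
  rw [habs]
  have hbnd0 : (0:ℝ) ≤ 2*x/r + (1+(x-1)^2)/r^2 := by
    have i1 : (0:ℝ) ≤ 2*x/r := div_nonneg (by linarith) hr0.le
    have i2 : (0:ℝ) ≤ (1+(x-1)^2)/r^2 := div_nonneg (by positivity) (sq_nonneg r)
    linarith
  have step1 : (x-1)^2 * |(1-1/r)^2 - (1+(x-1)/r)^2| / (1+(x-1)/r)^2
      ≤ (x-1)^2 * (2*x/r + (1+(x-1)^2)/r^2) / (81/100) :=
    div_le_div₀ (mul_nonneg (sq_nonneg _) hbnd0)
      (mul_le_mul_of_nonneg_left hYbound (sq_nonneg _)) (by norm_num) hD2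
  refine step1.trans ?_
  have h1 : (x-1)^2 ≤ x^2+1 := by nlinarith
  have h2 : 2*x ≤ x^2+1 := by nlinarith [sq_nonneg (x-1)]
  have hS1 : (x-1)^2 * (2*x/r) ≤ (x^2+1)^2/r := by
    rw [show (x-1)^2 * (2*x/r) = ((x-1)^2 * (2*x))/r from by ring]
    refine div_le_div₀ (by positivity) ?_ hr0 le_rfl
    calc (x-1)^2 * (2*x) ≤ (x^2+1)*(x^2+1) :=
          mul_le_mul h1 h2 (by linarith) (by positivity)
      _ = (x^2+1)^2 := by ring
  have hS2 : (x-1)^2 * ((1+(x-1)^2)/r^2) ≤ (x^2+1)^2/(5*r) := by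
    rw [show (x-1)^2 * ((1+(x-1)^2)/r^2) = ((x-1)^2 * (1+(x-1)^2))/r^2 from by ring]
    have hnum : (x-1)^2 * (1+(x-1)^2) ≤ 2*(x^2+1)^2 := by
      have h3 : 1+(x-1)^2 ≤ 2*(x^2+1) := by nlinarith
      calc (x-1)^2 * (1+(x-1)^2) ≤ (x^2+1)*(2*(x^2+1)) :=
            mul_le_mul h1 h3 (by positivity) (by positivity)
        _ = 2*(x^2+1)^2 := by ring
    calc ((x-1)^2 * (1+(x-1)^2))/r^2 ≤ (2*(x^2+1)^2)/(10*r) :=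
          div_le_div₀ (by positivity) hnum (by linarith) (by nlinarith)
      _ = (x^2+1)^2/(5*r) := by ring
  have hd : (0:ℝ) ≤ (x^2+1)^2/r := by positivity
  have heq : (x-1)^2 * (2*x/r + (1+(x-1)^2)/r^2) / (81/100)
      = (100/81) * ((x-1)^2 * (2*x/r) + (x-1)^2 * ((1+(x-1)^2)/r^2)) := by ring
  have heq2 : (x^2+1)^2/(5*r) = (x^2+1)^2/r/5 := by ring
  have heq3 : 4/r * (x^2+1)^2 = 4*((x^2+1)^2/r) := by ring
  rw [heq, heq3]
  rw [heq2] at hS2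
  linarith

section pdf
variable {ν : ℝ}

lemma studentPdf_eq (t : ℝ) :
    studentPdf ν t = (Gamma ((ν + 1) / 2) / (Real.sqrt (ν * π) * Gamma (ν / 2)))
      * (1 + t ^ 2 / ν) ^ (-((ν + 1) / 2)) := by
  rw [studentPdf, neg_div]

lemma studentPdf_pos (hν : 9 ≤ ν) (t : ℝ) : 0 < studentPdf ν t := by
  rw [studentPdf_eq]
  have h1 : 0 < Gamma ((ν + 1) / 2) := Gamma_pos_of_pos (by linarith)
  have h2 : 0 < Gamma (ν / 2) := Gamma_pos_of_pos (by linarith)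
  have h3 : 0 < Real.sqrt (ν * π) := Real.sqrt_pos.mpr (mul_pos (by linarith) pi_pos)
  have h4 : 0 < (1 + t^2/ν) ^ (-((ν+1)/2)) :=
    rpow_pos_of_pos (base_pos (by linarith) t) _
  exact mul_pos (div_pos h1 (mul_pos h3 h2)) h4

lemma studentPdf_cont (hν : 9 ≤ ν) : Continuous (studentPdf ν) := by
  have h := (continuous_const (y := Gamma ((ν + 1) / 2) / (Real.sqrt (ν * π) * Gamma (ν / 2)))).mul
    (contG (show (0:ℝ) < ν by linarith) 0 ((ν+1)/2))
  simp only [pow_zero, one_mul] at h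
  convert h using 1
  funext t
  rw [studentPdf_eq]
  rfl

lemma moment_integrable (hν : 9 ≤ ν) {j : ℕ} (hj : j ≤ 4) :
    Integrable (fun t : ℝ => t ^ (2*j) * studentPdf ν t) := by
  have h : (fun t : ℝ => t ^ (2*j) * studentPdf ν t)
      = fun t => (Gamma ((ν + 1) / 2) / (Real.sqrt (ν * π) * Gamma (ν / 2)))
          * (t ^ (2*j) * (1 + t ^ 2 / ν) ^ (-((ν+1)/2))) := by
    funext t; rw [studentPdf_eq]; ring
  rw [h]
  refine (intG (by linarith) ?_).const_mul _
  have : (j:ℝ) ≤ 4 := by exact_mod_cast hj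
  push_cast; linarith

lemma moment_eq (j : ℕ) :
    ∫ t : ℝ, t ^ (2*j) * studentPdf ν t
      = (Gamma ((ν + 1) / 2) / (Real.sqrt (ν * π) * Gamma (ν / 2)))
        * ∫ t : ℝ, t ^ (2*j) * (1 + t ^ 2 / ν) ^ (-((ν+1)/2)) := by
  rw [← integral_const_mul]; congr 1; funext t; rw [studentPdf_eq]; ring

lemma moment_rec' (hν : 9 ≤ ν) {j : ℕ} (hj : j ≤ 3) :
    (ν - (2*j+2)) * ∫ t : ℝ, t ^ (2*(j+1)) * studentPdf ν t
      = (2*j+1) * ν * ∫ t : ℝ, t ^ (2*j) * studentPdf ν t := by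
  rw [show 2*(j+1) = 2*j+2 from by ring]
  have meq1 := moment_eq (ν := ν) (j+1)
  rw [show 2*(j+1) = 2*j+2 from by ring] at meq1
  rw [meq1, moment_eq j]
  have h := moment_rec hν hj
  linear_combination (Gamma ((ν + 1) / 2) / (Real.sqrt (ν * π) * Gamma (ν / 2))) * h

lemma moment_nonneg (hν : 9 ≤ ν) (j : ℕ) :
    0 ≤ ∫ t : ℝ, t ^ (2*j) * studentPdf ν t :=
  integral_nonneg fun t => mul_nonneg
    (by rw [pow_mul]; exact pow_nonneg (sq_nonneg t) j) (studentPdf_pos hν t).le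

end pdf

set_option maxHeartbeats 2000000 in
theorem stmt_3 :
    ∃ K : ℝ, 0 < K ∧
      ∀ (k : ℕ), 9 < k →
        ∀ (Ω : Type) (_ : MeasureSpace Ω) (_ : IsProbabilityMeasure (ℙ : Measure Ω))
          (T : Ω → ℝ),
          Integrable (fun ω => (T ω) ^ 2) ℙ →
          HasStudentTDist T ((k : ℝ) - 1) →
          |(∫ ω, ((T ω) ^ 2 / (1 + ((T ω) ^ 2 - 1) / (k : ℝ)) - 1) ^ 2 ∂ℙ) - 2| ≤ K / k := by
  refine ⟨100000, by norm_num, ?_⟩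
  intro k hk Ω _ hprob T _ hdist
  have hk10n : (10:ℕ) ≤ k := hk
  have hk10 : (10:ℝ) ≤ (k:ℝ) := by exact_mod_cast hk10n
  have hk0 : (0:ℝ) < k := by linarith
  rw [HasStudentTDist] at hdist
  obtain ⟨ν, hνdef⟩ : ∃ ν : ℝ, (k:ℝ) - 1 = ν := ⟨_, rfl⟩
  rw [hνdef] at hdist
  have hν : 9 ≤ ν := by rw [← hνdef]; linarith
  have hne2 : ν - 2 ≠ 0 := by intro h; nlinarith
  have hne4 : ν - 4 ≠ 0 := by intro h; nlinarith
  -- T is a.e.-measurable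
  have hTae : AEMeasurable T ℙ := by
    by_contra hc
    rw [Measure.map_of_not_aemeasurable hc] at hdist
    have h0 : (volume.withDensity fun t => ENNReal.ofReal (studentPdf ν t)) univ = 0 := by
      rw [← hdist]; simp
    rw [withDensity_apply _ MeasurableSet.univ, Measure.restrict_univ] at h0
    have hpos : 0 < ∫⁻ t, ENNReal.ofReal (studentPdf ν t) := by
      rw [lintegral_pos_iff_support
        ((studentPdf_cont hν).measurable.ennreal_ofReal)]
      have hsupp : (Function.support fun t => ENNReal.ofReal (studentPdf ν t)) = univ := by
        ext t
        simp only [Function.mem_support, mem_univ, iff_true]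
        exact (ENNReal.ofReal_pos.mpr (studentPdf_pos hν t)).ne'
      rw [hsupp, Real.volume_univ]
      exact ENNReal.zero_lt_top
    rw [h0] at hpos
    exact lt_irrefl _ hpos
  -- normalization
  have hpdf_int : Integrable (studentPdf ν) := by
    have h := moment_integrable hν (j := 0) (by norm_num)
    simpa using h
  have hnorm : ∫ t, studentPdf ν t = 1 := by
    have huniv : (volume.withDensity fun t => ENNReal.ofReal (studentPdf ν t)) univ = 1 := by
      rw [← hdist, Measure.map_apply_of_aemeasurable hTae MeasurableSet.univ]
      simp
    rw [withDensity_apply _ MeasurableSet.univ, Measure.restrict_univ] at huniv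
    have h1 : ENNReal.ofReal (∫ t, studentPdf ν t) = 1 := by
      rw [ofReal_integral_eq_lintegral_ofReal hpdf_int
        (ae_of_all _ fun t => (studentPdf_pos hν t).le)]
      exact huniv
    have h2 := congrArg ENNReal.toReal h1
    rwa [ENNReal.toReal_ofReal (integral_nonneg fun t => (studentPdf_pos hν t).le),
      ENNReal.toReal_one] at h2
  -- denominator positivity and F continuity
  have hden : ∀ t : ℝ, 0 < 1 + (t^2-1)/(k:ℝ) := by
    intro t
    have he : 1 + (t^2-1)/(k:ℝ) = ((k:ℝ)-1+t^2)/(k:ℝ) := by field_simp; ring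
    rw [he]
    apply div_pos _ hk0
    nlinarith [sq_nonneg t]
  have hFcont : Continuous (fun t : ℝ => (t^2/(1 + (t^2-1)/(k:ℝ)) - 1)^2) := by
    apply Continuous.pow
    exact ((continuous_pow 2).div (by continuity) (fun t => (hden t).ne')).sub continuous_const
  -- transfer to Lebesgue integral
  have hmap : ∫ ω, ((T ω)^2/(1 + ((T ω)^2 - 1)/(k:ℝ)) - 1)^2 ∂ℙ
      = ∫ t, (t^2/(1 + (t^2-1)/(k:ℝ)) - 1)^2 * studentPdf ν t := by
    have h1 : ∫ ω, ((T ω)^2/(1 + ((T ω)^2 - 1)/(k:ℝ)) - 1)^2 ∂ℙ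
        = ∫ t, (t^2/(1 + (t^2-1)/(k:ℝ)) - 1)^2
            ∂(volume.withDensity fun t => ENNReal.ofReal (studentPdf ν t)) := by
      rw [← hdist, integral_map hTae hFcont.aestronglyMeasurable]
    rw [h1]
    have hcm : Measurable fun t => (studentPdf ν t).toNNReal :=
      (studentPdf_cont hν).measurable.real_toNNReal
    have he : (fun t => ENNReal.ofReal (studentPdf ν t))
        = fun t => ((studentPdf ν t).toNNReal : ENNReal) := rfl
    rw [he, integral_withDensity_eq_integral_smul hcm]
    congr 1
    funext t
    rw [NNReal.smul_def, Real.coe_toNNReal _ (studentPdf_pos hν t).le, smul_eq_mul]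
    ring
  rw [hmap]
  -- integrability of the explicit moments
  have hI0 : Integrable (fun t : ℝ => studentPdf ν t) := hpdf_int
  have hI1 : Integrable (fun t : ℝ => t^2 * studentPdf ν t) := by
    have h := moment_integrable hν (j := 1) (by norm_num); norm_num at h; exact h
  have hI2 : Integrable (fun t : ℝ => t^4 * studentPdf ν t) := by
    have h := moment_integrable hν (j := 2) (by norm_num); norm_num at h; exact h
  have hI3 : Integrable (fun t : ℝ => t^6 * studentPdf ν t) := by
    have h := moment_integrable hν (j := 3) (by norm_num); norm_num at h; exact h
  have hI4 : Integrable (fun t : ℝ => t^8 * studentPdf ν t) := by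
    have h := moment_integrable hν (j := 4) (by norm_num); norm_num at h; exact h
  -- moment values
  have hN0 : (0:ℝ) ≤ ∫ t : ℝ, t^2 * studentPdf ν t := by
    have h := moment_nonneg hν 1; norm_num at h; exact h
  have hN2 : (0:ℝ) ≤ ∫ t : ℝ, t^4 * studentPdf ν t := by
    have h := moment_nonneg hν 2; norm_num at h; exact h
  have hN3 : (0:ℝ) ≤ ∫ t : ℝ, t^6 * studentPdf ν t := by
    have h := moment_nonneg hν 3; norm_num at h; exact h
  have hN4 : (0:ℝ) ≤ ∫ t : ℝ, t^8 * studentPdf ν t := by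
    have h := moment_nonneg hν 4; norm_num at h; exact h
  have m1 : (ν-2) * (∫ t : ℝ, t^2 * studentPdf ν t) = ν := by
    have h := moment_rec' hν (j := 0) (by norm_num)
    norm_num at h
    rw [hnorm] at h
    linarith
  have m2 : (ν-4) * (∫ t : ℝ, t^4 * studentPdf ν t)
      = 3 * ν * ∫ t : ℝ, t^2 * studentPdf ν t := by
    have h := moment_rec' hν (j := 1) (by norm_num)
    norm_num at h
    linarith
  have m3 : (ν-6) * (∫ t : ℝ, t^6 * studentPdf ν t)
      = 5 * ν * ∫ t : ℝ, t^4 * studentPdf ν t := by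
    have h := moment_rec' hν (j := 2) (by norm_num)
    norm_num at h
    linarith
  have m4 : (ν-8) * (∫ t : ℝ, t^8 * studentPdf ν t)
      = 7 * ν * ∫ t : ℝ, t^6 * studentPdf ν t := by
    have h := moment_rec' hν (j := 3) (by norm_num)
    norm_num at h
    linarith
  -- moment bounds
  have hI1v : (∫ t : ℝ, t^2 * studentPdf ν t) = ν/(ν-2) := by
    rw [eq_div_iff (by linarith : ν-2 ≠ 0)]
    linarith [m1]
  have b1 : (∫ t : ℝ, t^2 * studentPdf ν t) ≤ 9/7 := by
    rw [hI1v, div_le_iff₀ (by linarith)]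
    linarith
  have b2 : (∫ t : ℝ, t^4 * studentPdf ν t) ≤ 7 := by
    nlinarith [mul_le_mul_of_nonneg_left b1 (show (0:ℝ) ≤ 3*ν by linarith)]
  have b3 : (∫ t : ℝ, t^6 * studentPdf ν t) ≤ 105 := by
    nlinarith [mul_le_mul_of_nonneg_left b2 (show (0:ℝ) ≤ 5*ν by linarith)]
  have b4 : (∫ t : ℝ, t^8 * studentPdf ν t) ≤ 6615 := by
    nlinarith [mul_le_mul_of_nonneg_left b3 (show (0:ℝ) ≤ 7*ν by linarith)]
  -- central term
  have hAeq : (fun t : ℝ => (t^2-1)^2 * studentPdf ν t)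
      = fun t : ℝ => t^4 * studentPdf ν t - 2*(t^2*studentPdf ν t) + studentPdf ν t := by
    funext t; ring
  have hsubA : Integrable (fun t : ℝ => t^4 * studentPdf ν t - 2*(t^2*studentPdf ν t)) :=
    hI2.sub (hI1.const_mul 2)
  have hAint : Integrable (fun t : ℝ => (t^2-1)^2 * studentPdf ν t) := by
    rw [hAeq]; exact hsubA.add hI0
  have hAval : ∫ t : ℝ, (t^2-1)^2 * studentPdf ν t
      = (∫ t : ℝ, t^4 * studentPdf ν t) - 2*(∫ t : ℝ, t^2 * studentPdf ν t) + 1 := by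
    rw [hAeq, integral_add hsubA hI0,
      integral_sub hI2 (hI1.const_mul 2), integral_const_mul, hnorm]
  -- pointwise error bound
  have hpt : ∀ t : ℝ, |(t^2/(1 + (t^2-1)/(k:ℝ)) - 1)^2 * studentPdf ν t
      - (t^2-1)^2 * studentPdf ν t|
      ≤ 4/(k:ℝ) * (((t^2)^2+1)^2 * studentPdf ν t) := by
    intro t
    rw [← sub_mul, abs_mul, abs_of_nonneg (studentPdf_pos hν t).le, ← mul_assoc]
    exact mul_le_mul_of_nonneg_right (key_alg hk10 (sq_nonneg t)) (studentPdf_pos hν t).le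
  -- majorant
  have hMeq : (fun t : ℝ => ((t^2)^2+1)^2 * studentPdf ν t)
      = fun t : ℝ => t^8 * studentPdf ν t + 2*(t^4*studentPdf ν t) + studentPdf ν t := by
    funext t; ring
  have haddM : Integrable (fun t : ℝ => t^8 * studentPdf ν t + 2*(t^4*studentPdf ν t)) :=
    hI4.add (hI2.const_mul 2)
  have hMint : Integrable (fun t : ℝ => ((t^2)^2+1)^2 * studentPdf ν t) := by
    rw [hMeq]; exact haddM.add hI0
  have hMval : ∫ t : ℝ, ((t^2)^2+1)^2 * studentPdf ν t
      = (∫ t : ℝ, t^8 * studentPdf ν t) + 2*(∫ t : ℝ, t^4 * studentPdf ν t) + 1 := by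
    rw [hMeq, integral_add haddM hI0,
      integral_add hI4 (hI2.const_mul 2), integral_const_mul, hnorm]
  -- integrability of F * pdf
  have hmaj : Integrable (fun t : ℝ => (t^2-1)^2 * studentPdf ν t
      + 4/(k:ℝ) * (((t^2)^2+1)^2 * studentPdf ν t)) :=
    hAint.add (hMint.const_mul (4/(k:ℝ)))
  have hFint : Integrable (fun t : ℝ =>
      (t^2/(1 + (t^2-1)/(k:ℝ)) - 1)^2 * studentPdf ν t) := by
    refine hmaj.mono'
      ((hFcont.mul (studentPdf_cont hν)).aestronglyMeasurable) (ae_of_all _ fun t => ?_)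
    have h1 := hpt t
    have h2 : (0:ℝ) ≤ (t^2/(1 + (t^2-1)/(k:ℝ)) - 1)^2 * studentPdf ν t :=
      mul_nonneg (sq_nonneg _) (studentPdf_pos hν t).le
    rw [Real.norm_eq_abs, abs_of_nonneg h2]
    have h3 := le_abs_self ((t^2/(1 + (t^2-1)/(k:ℝ)) - 1)^2 * studentPdf ν t
      - (t^2-1)^2 * studentPdf ν t)
    linarith
  -- error integral bound
  have hdiffint : Integrable (fun t : ℝ =>
      (t^2/(1 + (t^2-1)/(k:ℝ)) - 1)^2 * studentPdf ν t - (t^2-1)^2 * studentPdf ν t) :=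
    hFint.sub hAint
  have herr : |(∫ t : ℝ, (t^2/(1 + (t^2-1)/(k:ℝ)) - 1)^2 * studentPdf ν t)
      - ∫ t : ℝ, (t^2-1)^2 * studentPdf ν t| ≤ 26520/(k:ℝ) := by
    rw [← integral_sub hFint hAint]
    rw [← Real.norm_eq_abs]
    refine (norm_integral_le_integral_norm _).trans ?_
    simp only [Real.norm_eq_abs]
    have hmono : ∫ t : ℝ, |(t^2/(1 + (t^2-1)/(k:ℝ)) - 1)^2 * studentPdf ν t
        - (t^2-1)^2 * studentPdf ν t|
        ≤ ∫ t : ℝ, 4/(k:ℝ) * (((t^2)^2+1)^2 * studentPdf ν t) :=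
      integral_mono hdiffint.abs (hMint.const_mul _) hpt
    refine hmono.trans ?_
    rw [integral_const_mul, hMval]
    have h4k : (0:ℝ) < 4/(k:ℝ) := by positivity
    have : (∫ t : ℝ, t^8 * studentPdf ν t) + 2*(∫ t : ℝ, t^4 * studentPdf ν t) + 1 ≤ 6630 := by
      linarith
    calc 4/(k:ℝ) * ((∫ t : ℝ, t^8 * studentPdf ν t) + 2*(∫ t : ℝ, t^4 * studentPdf ν t) + 1)
        ≤ 4/(k:ℝ) * 6630 := by
          exact mul_le_mul_of_nonneg_left this h4k.le
      _ = 26520/(k:ℝ) := by ring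
  -- central bound
  have hI2v : (∫ t : ℝ, t^4 * studentPdf ν t) = 3*ν^2/((ν-2)*(ν-4)) := by
    rw [eq_div_iff (mul_ne_zero hne2 hne4)]
    have h := m2
    rw [hI1v] at h
    field_simp at h
    nlinarith [h]
  have hcenter : |(∫ t : ℝ, (t^2-1)^2 * studentPdf ν t) - 2| ≤ 37/(k:ℝ) := by
    rw [hAval, hI2v, hI1v]
    have he : 3*ν^2/((ν-2)*(ν-4)) - 2*(ν/(ν-2)) + 1 - 2 = (14*ν-8)/((ν-2)*(ν-4)) := by
      field_simp
      ring
    rw [he, abs_of_nonneg (div_nonneg (by linarith) (by nlinarith))]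
    rw [div_le_div_iff₀ (by nlinarith) hk0]
    rw [← hνdef]
    nlinarith [sq_nonneg ((k:ℝ)-10)]
  -- conclusion
  calc |(∫ t : ℝ, (t^2/(1 + (t^2-1)/(k:ℝ)) - 1)^2 * studentPdf ν t) - 2|
      ≤ |(∫ t : ℝ, (t^2/(1 + (t^2-1)/(k:ℝ)) - 1)^2 * studentPdf ν t)
          - ∫ t : ℝ, (t^2-1)^2 * studentPdf ν t|
        + |(∫ t : ℝ, (t^2-1)^2 * studentPdf ν t) - 2| := abs_sub_le _ _ _
    _ ≤ 26520/(k:ℝ) + 37/(k:ℝ) := add_le_add herr hcenter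
    _ ≤ 100000/(k:ℝ) := by
        rw [← add_div]
        exact div_le_div₀ (by norm_num) (by norm_num) hk0 le_rfl
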